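/- For a prime p and nonempty digit set D ⊆ {0,...,p-1} with |D| ≥ 1, the Hausdorff dimension of Σ_p(D) as a subset of the metric space ℤ_p equals log |D| / log p. -/

import Mathlib

open scoped NNReal ENNReal Topology
open Filter MeasureTheory
open scoped Pointwise

/-- The `k`-th digit of the `p`-adic expansion of `x`, i.e. `x = ∑ α_k p^k` with
`α_k ∈ {0,...,p-1}`. -/
noncomputable def padicDigit (p : ℕ) [Fact p.Prime] (x : ℤ_[p]) (k : ℕ) : ℕ :=
  x.appr (k + 1) / p ^ k % p

variable {p : ℕ} [Fact p.Prime]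

lemma PD.nat_eq_of_norm_le {n m m' : ℕ} (hm : m < p ^ n) (hm' : m' < p ^ n)
    (h : ‖(m : ℤ_[p]) - m'‖ ≤ (p : ℝ) ^ (-n : ℤ)) : m = m' := by
  have hcast : ((((m : ℤ) - m') : ℤ) : ℤ_[p]) = (m : ℤ_[p]) - m' := by push_cast; ring
  rw [← hcast, PadicInt.norm_int_le_pow_iff_dvd] at h
  have h0 : (m : ℤ) - m' = 0 := by
    refine Int.eq_zero_of_abs_lt_dvd h ?_
    have h1 : (m : ℤ) < (p:ℤ) ^ n := by exact_mod_cast hm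
    have h2 : (m' : ℤ) < (p:ℤ) ^ n := by exact_mod_cast hm'
    rw [abs_sub_lt_iff]
    constructor <;> [skip; skip] <;> omega
  omega

lemma PD.norm_appr_sub_le (x : ℤ_[p]) (n : ℕ) :
    ‖x - (x.appr n : ℤ_[p])‖ ≤ (p : ℝ) ^ (-n : ℤ) :=
  (PadicInt.norm_le_pow_iff_mem_span_pow _ n).2 (PadicInt.appr_spec n x)

/-- If two elements are `p^n`-close then they have the same `n`-th approximation. -/
lemma PD.appr_eq_of_norm_le {x y : ℤ_[p]} {n : ℕ} (h : ‖x - y‖ ≤ (p : ℝ) ^ (-n : ℤ)) :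
    x.appr n = y.appr n := by
  refine PD.nat_eq_of_norm_le (x.appr_lt n) (y.appr_lt n) ?_
  have e : (x.appr n : ℤ_[p]) - y.appr n = ((x.appr n : ℤ_[p]) - x) + ((x - y) + (y - y.appr n)) := by ring
  calc ‖(x.appr n : ℤ_[p]) - y.appr n‖
      ≤ max ‖(x.appr n : ℤ_[p]) - x‖ (max ‖x - y‖ ‖y - (y.appr n : ℤ_[p])‖) := by
        rw [e]
        exact le_trans (PadicInt.nonarchimedean _ _)
          (max_le_max le_rfl (PadicInt.nonarchimedean _ _))
    _ ≤ (p : ℝ) ^ (-n : ℤ) := by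
        refine max_le ?_ (max_le h (PD.norm_appr_sub_le y n))
        rw [← norm_neg]; simpa using PD.norm_appr_sub_le x n

lemma PD.digit_lt (x : ℤ_[p]) (k : ℕ) : padicDigit p x k < p :=
  Nat.mod_lt _ (Fact.out : p.Prime).pos

lemma PD.appr_succ (x : ℤ_[p]) (k : ℕ) :
    x.appr (k + 1) = x.appr k + padicDigit p x k * p ^ k := by
  obtain ⟨c, hc⟩ := x.dvd_appr_sub_appr k (k + 1) (Nat.le_succ k)
  have hmono : x.appr k ≤ x.appr (k+1) := x.appr_mono (Nat.le_succ k)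
  have hk : x.appr (k + 1) = x.appr k + p ^ k * c := by omega
  have hlt := x.appr_lt (k + 1)
  have hak := x.appr_lt k
  have hcp : c < p := by
    rw [hk] at hlt
    by_contra hge
    push_neg at hge
    have : p ^ k * p ≤ p ^ k * c := Nat.mul_le_mul_left _ hge
    rw [pow_succ] at hlt
    omega
  have : padicDigit p x k = c := by
    rw [padicDigit, hk, Nat.add_mul_div_left _ _ (Nat.pow_pos (n := k) (Fact.out : p.Prime).pos)]
    rw [Nat.div_eq_of_lt hak, zero_add, Nat.mod_eq_of_lt hcp]
  rw [this, mul_comm]; exact hk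

lemma PD.appr_eq_sum (x : ℤ_[p]) (n : ℕ) :
    x.appr n = ∑ k ∈ Finset.range n, padicDigit p x k * p ^ k := by
  induction n with
  | zero => simp [PadicInt.appr]
  | succ n ih => rw [Finset.sum_range_succ, ← ih, PD.appr_succ]

lemma PD.summable_digits (a : ℕ → ℕ) :
    Summable (fun k => (a k : ℤ_[p]) * (p : ℤ_[p]) ^ k) := by
  have hp1 : (1 : ℝ) < p := by exact_mod_cast (Fact.out : p.Prime).one_lt
  refine Summable.of_norm_bounded (g := fun k => ((p : ℝ)⁻¹) ^ k) ?_ ?_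
  · exact summable_geometric_of_lt_one (by positivity) (inv_lt_one_of_one_lt₀ hp1)
  · intro k
    calc ‖(a k : ℤ_[p]) * (p : ℤ_[p]) ^ k‖ = ‖(a k : ℤ_[p])‖ * ‖(p : ℤ_[p]) ^ k‖ :=
          norm_mul _ _
      _ ≤ 1 * ((p : ℝ)⁻¹) ^ k := by
          refine mul_le_mul (PadicInt.norm_le_one _) ?_ (norm_nonneg _) zero_le_one
          rw [PadicInt.norm_p_pow, zpow_neg, zpow_natCast, inv_pow]
      _ = ((p : ℝ)⁻¹) ^ k := one_mul _

lemma PD.exists_of_digits (a : ℕ → ℕ) (ha : ∀ k, a k < p) :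
    ∃ x : ℤ_[p], ∀ k, padicDigit p x k = a k := by
  set x : ℤ_[p] := ∑' k, (a k : ℤ_[p]) * (p : ℤ_[p]) ^ k with hx
  set S : ℕ → ℕ := fun n => ∑ k ∈ Finset.range n, a k * p ^ k with hS
  have hSlt : ∀ n, S n < p ^ n := by
    intro n
    induction n with
    | zero => simp [hS]
    | succ n ih =>
        have h1 : S (n+1) = S n + a n * p ^ n := Finset.sum_range_succ _ _
        have h2 : (a n + 1) * p ^ n ≤ p * p ^ n := Nat.mul_le_mul_right _ (ha n)
        calc S (n+1) = S n + a n * p ^ n := h1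
          _ < p ^ n + a n * p ^ n := by omega
          _ = (a n + 1) * p ^ n := by ring
          _ ≤ p * p ^ n := h2
          _ = p ^ (n+1) := by ring
  have happr : ∀ n, x.appr n = S n := by
    intro n
    have htail : ‖x - (S n : ℤ_[p])‖ ≤ (p : ℝ) ^ (-n : ℤ) := by
      have hsum := PD.summable_digits (p := p) a
      have h1 : (S n : ℤ_[p]) = ∑ k ∈ Finset.range n, (a k : ℤ_[p]) * (p : ℤ_[p]) ^ k := by
        rw [hS]; push_cast; ring_nf
        exact Finset.sum_congr rfl fun _ _ => mul_comm _ _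
      have h2 := Summable.sum_add_tsum_nat_add (f := fun k => (a k : ℤ_[p]) * (p : ℤ_[p]) ^ k) n hsum
      have h3 : x - (S n : ℤ_[p]) = ∑' k, (a (k + n) : ℤ_[p]) * (p : ℤ_[p]) ^ (k + n) := by
        rw [h1, hx, ← h2]; ring
      have h4 : (fun k => (a (k + n) : ℤ_[p]) * (p : ℤ_[p]) ^ (k + n))
          = fun k => (p : ℤ_[p]) ^ n * ((a (k + n) : ℤ_[p]) * (p : ℤ_[p]) ^ k) := by
        funext k; ring
      have h5 : x - (S n : ℤ_[p])
          = (p : ℤ_[p]) ^ n * ∑' k, (a (k + n) : ℤ_[p]) * (p : ℤ_[p]) ^ k := by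
        rw [h3, h4, (PD.summable_digits (fun k => a (k + n))).tsum_mul_left _]
      rw [h5]
      calc ‖(p : ℤ_[p]) ^ n * ∑' k, (a (k + n) : ℤ_[p]) * (p : ℤ_[p]) ^ k‖
          = ‖(p : ℤ_[p]) ^ n‖ * ‖∑' k, (a (k + n) : ℤ_[p]) * (p : ℤ_[p]) ^ k‖ :=
            norm_mul _ _
        _ ≤ (p : ℝ) ^ (-n : ℤ) * 1 := by
            rw [PadicInt.norm_p_pow]
            exact mul_le_mul le_rfl (PadicInt.norm_le_one _) (norm_nonneg _) (by positivity)
        _ = (p : ℝ) ^ (-n : ℤ) := mul_one _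
    refine PD.nat_eq_of_norm_le (x.appr_lt n) (hSlt n) ?_
    have e : (x.appr n : ℤ_[p]) - (S n : ℤ_[p])
        = ((x.appr n : ℤ_[p]) - x) + (x - (S n : ℤ_[p])) := by ring
    rw [e]
    refine le_trans (PadicInt.nonarchimedean _ _) (max_le ?_ htail)
    rw [← norm_neg]; simpa using PD.norm_appr_sub_le x n
  refine ⟨x, fun k => ?_⟩
  have hstep : S (k + 1) = S k + a k * p ^ k := Finset.sum_range_succ _ _
  rw [padicDigit, happr, hstep,
    Nat.add_mul_div_right _ _ (Nat.pow_pos (n := k) (Fact.out : p.Prime).pos),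
    Nat.div_eq_of_lt (hSlt k), zero_add, Nat.mod_eq_of_lt (ha k)]

lemma PD.real_expansion {q : ℕ} (hq : 2 ≤ q) {y : ℝ} (h0 : 0 ≤ y) (h1 : y < 1) :
    ∃ b : ℕ → ℕ, (∀ k, b k < q) ∧ HasSum (fun k => (b k : ℝ) * ((q : ℝ)⁻¹) ^ (k + 1)) y := by
  have hq0 : (0:ℝ) < q := by positivity
  have hq1 : (1:ℝ) < q := by exact_mod_cast hq.trans_lt' one_lt_two
  set c : ℕ → ℤ := fun n => ⌊y * (q:ℝ)^n⌋ with hc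
  have hkey : ∀ n, q * c n ≤ c (n+1) ∧ c (n+1) < q * c n + q := by
    intro n
    constructor
    · refine Int.le_floor.2 ?_
      push_cast
      calc ((q:ℝ)) * ⌊y * (q:ℝ)^n⌋ ≤ q * (y * q^n) :=
            mul_le_mul_of_nonneg_left (Int.floor_le _) (by positivity)
        _ = y * q^(n+1) := by ring
    · refine Int.floor_lt.2 ?_
      push_cast
      calc y * (q:ℝ)^(n+1) = (y * q^n) * q := by ring
        _ < ((⌊y * (q:ℝ)^n⌋ : ℝ) + 1) * q :=
            mul_lt_mul_of_pos_right (Int.lt_floor_add_one _) hq0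
        _ = q * (⌊y * (q:ℝ)^n⌋ : ℝ) + q := by ring
  set b : ℕ → ℕ := fun n => (c (n+1) - q * c n).toNat with hb
  have hbc : ∀ n, (b n : ℤ) = c (n+1) - q * c n := fun n =>
    Int.toNat_of_nonneg (by have := (hkey n).1; omega)
  have hblt : ∀ n, b n < q := by
    intro n
    have h2 := (hkey n).2
    have h3 := hbc n
    omega
  have hc0 : c 0 = 0 := by
    simp only [hc, pow_zero, mul_one]
    exact Int.floor_eq_zero_iff.2 ⟨h0, h1⟩
  have hP : ∀ n, ∑ k ∈ Finset.range n, (b k : ℝ) * ((q:ℝ)⁻¹)^(k+1) = (c n : ℝ) / (q:ℝ)^n := by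
    intro n
    induction n with
    | zero => simp [hc0]
    | succ n ih =>
        rw [Finset.sum_range_succ, ih]
        have h1 : (b n : ℝ) = (c (n+1) : ℝ) - q * c n := by
          have := hbc n; exact_mod_cast congrArg (Int.cast : ℤ → ℝ) this
        rw [h1]
        have hqn : ((q:ℝ))^n ≠ 0 := by positivity
        have hqn1 : ((q:ℝ))^(n+1) ≠ 0 := by positivity
        rw [inv_pow]
        field_simp
        ring
  have hdist : ∀ n, |∑ k ∈ Finset.range n, (b k : ℝ) * ((q:ℝ)⁻¹)^(k+1) - y| ≤ ((q:ℝ)⁻¹)^n := by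
    intro n
    rw [hP]
    have hfl := Int.floor_le (y * (q:ℝ)^n)
    have hfu := Int.lt_floor_add_one (y * (q:ℝ)^n)
    have hqnpos : (0:ℝ) < (q:ℝ)^n := by positivity
    have e1 : (c n : ℝ)/(q:ℝ)^n ≤ y := by
      rw [div_le_iff₀ hqnpos]; exact hfl
    have e3 : y ≤ ((c n : ℝ) + 1)/(q:ℝ)^n := by
      rw [le_div_iff₀ hqnpos]; linarith
    have e2 : y - (c n:ℝ)/(q:ℝ)^n ≤ ((q:ℝ)⁻¹)^n := by
      have e4 : ((c n:ℝ) + 1)/(q:ℝ)^n - (c n:ℝ)/(q:ℝ)^n = ((q:ℝ)^n)⁻¹ := by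
        field_simp
        ring
      rw [inv_pow]
      linarith
    rw [abs_sub_comm, abs_of_nonneg (by linarith)]
    exact e2
  refine ⟨b, hblt, ?_⟩
  rw [hasSum_iff_tendsto_nat_of_nonneg (fun i => by positivity) y]
  have htend0 : Filter.Tendsto (fun n => ((q:ℝ)⁻¹)^n) Filter.atTop (nhds 0) :=
    tendsto_pow_atTop_nhds_zero_of_lt_one (by positivity) (inv_lt_one_of_one_lt₀ hq1)
  have habs := squeeze_zero (fun n => abs_nonneg _) hdist htend0
  rw [tendsto_iff_dist_tendsto_zero]
  simpa [Real.dist_eq] using habs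

lemma PD.digit_eq_of_norm_le {x y : ℤ_[p]} {n k : ℕ} (hk : k < n)
    (h : ‖x - y‖ ≤ (p : ℝ) ^ (-n : ℤ)) : padicDigit p x k = padicDigit p y k := by
  have hp1 : (1:ℝ) < p := by exact_mod_cast (Fact.out : p.Prime).one_lt
  have h' : ‖x - y‖ ≤ (p : ℝ) ^ (-(k+1) : ℤ) := by
    refine h.trans ?_
    exact zpow_le_zpow_right₀ hp1.le (by omega)
  rw [padicDigit, padicDigit, PD.appr_eq_of_norm_le h']

noncomputable def PD.num (D : Finset ℕ) (d : ℕ) : ℕ :=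
  if h : d ∈ D then ((D.orderIsoOfFin rfl).symm ⟨d, h⟩ : Fin D.card) else 0

lemma PD.num_lt {D : Finset ℕ} (hD : 0 < D.card) (d : ℕ) : PD.num D d < D.card := by
  rw [PD.num]
  split_ifs with h
  · exact ((D.orderIsoOfFin rfl).symm ⟨d, h⟩).2
  · exact hD

lemma PD.num_enum (D : Finset ℕ) (j : Fin D.card) :
    PD.num D ((D.orderIsoOfFin rfl j : D) : ℕ) = j := by
  rw [PD.num]
  have hmem : ((D.orderIsoOfFin rfl j : D) : ℕ) ∈ D := (D.orderIsoOfFin rfl j).2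
  rw [dif_pos hmem]
  have : (⟨((D.orderIsoOfFin rfl j : D) : ℕ), hmem⟩ : D) = D.orderIsoOfFin rfl j := rfl
  rw [this, OrderIso.symm_apply_apply]

lemma PD.summable_main {q : ℕ} (hq : 2 ≤ q) (g : ℕ → ℕ) (hg : ∀ k, g k < q) :
    Summable (fun k => (g k : ℝ) * ((q : ℝ)⁻¹) ^ (k + 1)) := by
  have hq0 : (0:ℝ) < q := by positivity
  have hq1 : (1:ℝ) < q := by exact_mod_cast hq.trans_lt' one_lt_two
  refine Summable.of_norm_bounded (g := fun k => ((q:ℝ)⁻¹) ^ k) ?_ ?_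
  · exact summable_geometric_of_lt_one (by positivity) (inv_lt_one_of_one_lt₀ hq1)
  · intro k
    rw [Real.norm_eq_abs, abs_of_nonneg (by positivity)]
    calc (g k : ℝ) * ((q:ℝ)⁻¹) ^ (k+1) ≤ (q:ℝ) * ((q:ℝ)⁻¹) ^ (k+1) := by
          apply mul_le_mul_of_nonneg_right _ (by positivity)
          exact_mod_cast (hg k).le
      _ = ((q:ℝ) * (q:ℝ)⁻¹) * ((q:ℝ)⁻¹) ^ k := by rw [pow_succ]; ring
      _ = ((q:ℝ)⁻¹) ^ k := by rw [mul_inv_cancel₀ hq0.ne', one_mul]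

lemma PD.tail_bound {q : ℕ} (hq : 2 ≤ q) (g : ℕ → ℕ) (hg : ∀ k, g k < q) (n : ℕ) :
    |∑' k, (g (k + n) : ℝ) * ((q : ℝ)⁻¹) ^ (k + n + 1)| ≤ 2 * ((q : ℝ)⁻¹) ^ n := by
  have hq0 : (0:ℝ) < q := by positivity
  have hq1 : (1:ℝ) < q := by exact_mod_cast hq.trans_lt' one_lt_two
  set r : ℝ := (q:ℝ)⁻¹ with hr
  have hr0 : (0:ℝ) ≤ r := by positivity
  have hr1 : r < 1 := inv_lt_one_of_one_lt₀ hq1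
  have hrhalf : r ≤ 1/2 := by
    rw [hr]
    rw [show (1:ℝ)/2 = (2:ℝ)⁻¹ by norm_num]
    exact inv_anti₀ two_pos (by exact_mod_cast hq)
  have hb : ∀ k, |(g (k + n) : ℝ) * r ^ (k + n + 1)| ≤ r ^ n * r ^ k := by
    intro k
    rw [abs_of_nonneg (by positivity)]
    calc (g (k + n) : ℝ) * r ^ (k + n + 1) ≤ (q:ℝ) * r ^ (k + n + 1) := by
          apply mul_le_mul_of_nonneg_right _ (by positivity)
          exact_mod_cast (hg _).le
      _ = ((q:ℝ) * r) * r ^ (k + n) := by rw [pow_succ]; ring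
      _ = r ^ (k + n) := by rw [hr, mul_inv_cancel₀ hq0.ne', one_mul]
      _ = r ^ n * r ^ k := by rw [pow_add]; ring
  have hsb : Summable (fun k => r ^ n * r ^ k) :=
    (summable_geometric_of_lt_one hr0 hr1).mul_left _
  have hsum : Summable (fun k => (g (k + n) : ℝ) * r ^ (k + n + 1)) := by
    refine Summable.of_norm_bounded hsb hb
  calc |∑' k, (g (k + n) : ℝ) * r ^ (k + n + 1)| ≤ ∑' k, r ^ n * r ^ k := by
        have hsn : Summable (fun k => ‖(g (k + n) : ℝ) * r ^ (k + n + 1)‖) := by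
          simpa only [Real.norm_eq_abs] using hsum.abs
        refine (norm_tsum_le_tsum_norm hsn).trans
          (Summable.tsum_le_tsum (fun k => by simpa only [Real.norm_eq_abs] using hb k) hsn hsb)
    _ = r ^ n * (1 - r)⁻¹ := by
        rw [tsum_mul_left, tsum_geometric_of_lt_one hr0 hr1]
    _ ≤ r ^ n * 2 := by
        apply mul_le_mul_of_nonneg_left _ (by positivity)
        calc (1 - r)⁻¹ ≤ ((1:ℝ)/2)⁻¹ := inv_anti₀ (by norm_num) (by linarith)
          _ = 2 := by norm_num
    _ = 2 * r ^ n := by ring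

noncomputable def PD.f (p : ℕ) [Fact p.Prime] (D : Finset ℕ) (x : ℤ_[p]) : ℝ :=
  ∑' k, (PD.num D (padicDigit p x k) : ℝ) * ((D.card : ℝ)⁻¹) ^ (k + 1)

lemma PD.f_diff_bound {D : Finset ℕ} (hq : 2 ≤ D.card) (x y : ℤ_[p]) (n : ℕ)
    (hxy : ∀ k, k < n → padicDigit p x k = padicDigit p y k) :
    |PD.f p D x - PD.f p D y| ≤ 4 * ((D.card : ℝ)⁻¹) ^ n := by
  set q := D.card with hqdef
  set r : ℝ := (q:ℝ)⁻¹ with hr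
  set gx : ℕ → ℕ := fun k => PD.num D (padicDigit p x k) with hgxd
  set gy : ℕ → ℕ := fun k => PD.num D (padicDigit p y k) with hgyd
  have hgx : ∀ k, gx k < q := fun k => PD.num_lt (by omega) _
  have hgy : ∀ k, gy k < q := fun k => PD.num_lt (by omega) _
  have hsx := PD.summable_main hq gx hgx
  have hsy := PD.summable_main hq gy hgy
  have hfx : PD.f p D x
      = ∑ k ∈ Finset.range n, (gx k : ℝ) * r ^ (k+1) + ∑' k, (gx (k+n) : ℝ) * r ^ (k+n+1) :=
    (Summable.sum_add_tsum_nat_add n hsx).symm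
  have hfy : PD.f p D y
      = ∑ k ∈ Finset.range n, (gy k : ℝ) * r ^ (k+1) + ∑' k, (gy (k+n) : ℝ) * r ^ (k+n+1) :=
    (Summable.sum_add_tsum_nat_add n hsy).symm
  have hhead : ∑ k ∈ Finset.range n, (gx k : ℝ) * r ^ (k+1)
      = ∑ k ∈ Finset.range n, (gy k : ℝ) * r ^ (k+1) := by
    refine Finset.sum_congr rfl fun k hk => ?_
    rw [hgxd, hgyd]
    simp only []
    rw [hxy k (Finset.mem_range.1 hk)]
  have e : PD.f p D x - PD.f p D y
      = (∑' k, (gx (k+n) : ℝ) * r ^ (k+n+1)) - ∑' k, (gy (k+n) : ℝ) * r ^ (k+n+1) := by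
    rw [hfx, hfy, hhead]; ring
  rw [e]
  calc |(∑' k, (gx (k+n) : ℝ) * r ^ (k+n+1)) - ∑' k, (gy (k+n) : ℝ) * r ^ (k+n+1)|
      ≤ |∑' k, (gx (k+n) : ℝ) * r ^ (k+n+1)| + |∑' k, (gy (k+n) : ℝ) * r ^ (k+n+1)| :=
        abs_sub _ _
    _ ≤ 2 * r ^ n + 2 * r ^ n := add_le_add (PD.tail_bound hq gx hgx n) (PD.tail_bound hq gy hgy n)
    _ = 4 * r ^ n := by ring

lemma PD.norm_sub_le_of_appr_eq {x y : ℤ_[p]} {n : ℕ} (h : x.appr n = y.appr n) :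
    ‖x - y‖ ≤ (p : ℝ) ^ (-n : ℤ) := by
  have e : x - y = (x - (x.appr n : ℤ_[p])) + ((y.appr n : ℤ_[p]) - y) := by
    rw [h]; ring
  rw [e]
  refine le_trans (PadicInt.nonarchimedean _ _) (max_le (PD.norm_appr_sub_le x n) ?_)
  rw [← norm_neg]; simpa using PD.norm_appr_sub_le y n

/-- `Σ_p(D)`: the set of `p`-adic integers all of whose `p`-adic digits lie in `D`. -/
def SigmaSet (p : ℕ) [Fact p.Prime] (D : Set ℕ) : Set ℤ_[p] :=
  {x | ∀ k, padicDigit p x k ∈ D}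

/-- The Hausdorff dimension of Σ_p(D) equals log |D| / log p. -/
theorem sigmaSet_dimH (p : ℕ) [Fact p.Prime] (D : Finset ℕ)
    (hD : D.Nonempty) (hDp : ∀ d ∈ D, d < p) :
    dimH (SigmaSet p (↑D : Set ℕ)) =
      ENNReal.ofReal (Real.log (D.card) / Real.log p) := by
  borelize ℤ_[p]
  have hp2 : 2 ≤ p := (Fact.out : p.Prime).two_le
  set q := D.card with hqdef
  have hq1 : 1 ≤ q := hD.card_pos
  have hp1R : (1:ℝ) < p := by exact_mod_cast hp2
  have hq0R : (0:ℝ) < q := by exact_mod_cast hq1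
  set θ : ℝ := Real.log q / Real.log p with hθ
  have hlogp : 0 < Real.log p := Real.log_pos hp1R
  have hθ0 : 0 ≤ θ := div_nonneg (Real.log_nonneg (by exact_mod_cast hq1)) hlogp.le
  have hθp : θ * Real.log p = Real.log q := div_mul_cancel₀ _ hlogp.ne'
  have hkey : ∀ n : ℕ, ((p:ℝ) ^ (-n:ℤ)) ^ θ = ((q:ℝ)⁻¹) ^ n := by
    intro n
    have hbase : (0:ℝ) < (p:ℝ) ^ (-n:ℤ) := by positivity
    have h1 : ((p:ℝ) ^ (-n:ℤ)) ^ θ = Real.exp ((-(n:ℝ) * Real.log p) * θ) := by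
      rw [Real.rpow_def_of_pos hbase, Real.log_zpow]
      push_cast; ring_nf
    have h2 : ((q:ℝ)⁻¹) ^ n = Real.exp ((-(n:ℝ) * Real.log p) * θ) := by
      rw [← Real.exp_log (show (0:ℝ) < ((q:ℝ)⁻¹) ^ n by positivity)]
      congr 1
      rw [Real.log_pow, Real.log_inv, ← hθp]
      push_cast; ring
    rw [h1, h2]
  set θnn : ℝ≥0 := Real.toNNReal θ with hθnn
  have hθnnR : (θnn : ℝ) = θ := Real.coe_toNNReal θ hθ0
  have hofReal : ENNReal.ofReal θ = (θnn : ℝ≥0∞) := rfl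
  have hupper : dimH (SigmaSet p (↑D : Set ℕ)) ≤ (θnn : ℝ≥0∞) := by
    refine dimH_le_of_hausdorffMeasure_ne_top (ne_top_of_le_ne_top ENNReal.one_ne_top ?_)
    set t : ∀ n : ℕ, ((Fin n → ↥D) → Set ℤ_[p]) :=
      fun n a => {x : ℤ_[p] | x.appr n = ∑ k : Fin n, (a k : ℕ) * p ^ (k : ℕ)} with ht
    set rr : ℕ → ℝ≥0∞ := fun n => ENNReal.ofReal ((p:ℝ) ^ (-n : ℤ)) with hrr
    have hrzero : Tendsto rr atTop (nhds 0) := by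
      have h1 : Tendsto (fun n : ℕ => ((p:ℝ)⁻¹) ^ n) atTop (nhds 0) :=
        tendsto_pow_atTop_nhds_zero_of_lt_one (by positivity) (inv_lt_one_of_one_lt₀ hp1R)
      have h2 := ENNReal.tendsto_ofReal h1
      rw [ENNReal.ofReal_zero] at h2
      convert h2 using 2 with n
      simp only [hrr, zpow_neg, zpow_natCast, inv_pow]
    have hdiam : ∀ n (a : Fin n → ↥D), EMetric.diam (t n a) ≤ rr n := by
      intro n a
      refine EMetric.diam_le fun x hx y hy => ?_
      rw [edist_dist, dist_eq_norm]
      exact ENNReal.ofReal_le_ofReal (PD.norm_sub_le_of_appr_eq (hx.trans hy.symm))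
    have hcover : ∀ n : ℕ, SigmaSet p (↑D : Set ℕ) ⊆ ⋃ a, t n a := by
      intro n x hx
      refine Set.mem_iUnion.2 ⟨fun k => ⟨padicDigit p x (k : ℕ), hx (k : ℕ)⟩, ?_⟩
      show x.appr n = _
      rw [PD.appr_eq_sum x n, Finset.sum_range]
    have hmain := Measure.hausdorffMeasure_le_liminf_sum (θnn : ℝ) (SigmaSet p (↑D : Set ℕ)) rr hrzero t
      (Filter.Eventually.of_forall hdiam) (Filter.Eventually.of_forall hcover)
    refine hmain.trans ?_
    refine Filter.liminf_le_of_frequently_le' (Filter.Frequently.of_forall fun n => ?_)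
    have hterm : ∀ a : Fin n → ↥D, EMetric.diam (t n a) ^ (θnn : ℝ)
        ≤ ENNReal.ofReal (((q:ℝ)⁻¹) ^ n) := by
      intro a
      calc EMetric.diam (t n a) ^ (θnn : ℝ) ≤ (rr n) ^ (θnn : ℝ) :=
            ENNReal.rpow_le_rpow (hdiam n a) (by rw [hθnnR]; exact hθ0)
        _ = ENNReal.ofReal (((p:ℝ) ^ (-n : ℤ)) ^ θ) := by
            rw [hrr, hθnnR, ENNReal.ofReal_rpow_of_pos (by positivity)]
        _ = ENNReal.ofReal (((q:ℝ)⁻¹) ^ n) := by rw [hkey n]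
    calc ∑ a : Fin n → ↥D, EMetric.diam (t n a) ^ (θnn : ℝ)
        ≤ ∑ _a : Fin n → ↥D, ENNReal.ofReal (((q:ℝ)⁻¹) ^ n) :=
          Finset.sum_le_sum fun a _ => hterm a
      _ = (Fintype.card (Fin n → ↥D)) * ENNReal.ofReal (((q:ℝ)⁻¹) ^ n) := by
          rw [Finset.sum_const, nsmul_eq_mul, Finset.card_univ]
      _ = (q ^ n : ℕ) * ENNReal.ofReal (((q:ℝ)⁻¹) ^ n) := by
          rw [Fintype.card_fun, Fintype.card_coe, Fintype.card_fin]
      _ = ENNReal.ofReal ((q:ℝ) ^ n * ((q:ℝ)⁻¹) ^ n) := by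
          rw [ENNReal.ofReal_mul (by positivity)]
          congr 1
          rw [← ENNReal.ofReal_natCast (q ^ n)]
          congr 1
          push_cast; ring
      _ = 1 := by
          rw [← mul_pow, mul_inv_cancel₀ hq0R.ne', one_pow, ENNReal.ofReal_one]
  have hlower : (θnn : ℝ≥0∞) ≤ dimH (SigmaSet p (↑D : Set ℕ)) := by
    by_cases hq2 : 2 ≤ q
    · have hθpos : 0 < θnn := by
        rw [hθnn]
        refine Real.toNNReal_pos.2 (div_pos (Real.log_pos ?_) hlogp)
        exact_mod_cast hq2
      set Sig := SigmaSet p (↑D : Set ℕ) with hSig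
      set f := PD.f p D with hf
      have hholder : HolderOnWith 4 θnn f Sig := by
        intro x _ y _
        rcases eq_or_ne x y with rfl | hne
        · simp
        set v : ℕ := (x - y).valuation with hv
        have hval0 := Nat.zero_le (x - y).valuation
        have hnorm : ‖x - y‖ = (p:ℝ) ^ (-v : ℤ) := by
          rw [PadicInt.norm_eq_zpow_neg_valuation (sub_ne_zero.2 hne)]
        have hdig : ∀ k, k < v → padicDigit p x k = padicDigit p y k :=
          fun k hk => PD.digit_eq_of_norm_le hk (le_of_eq hnorm)
        have hfb := PD.f_diff_bound hq2 x y v hdig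
        rw [edist_dist, Real.dist_eq, edist_dist, dist_eq_norm, hnorm]
        calc ENNReal.ofReal |f x - f y| ≤ ENNReal.ofReal (4 * ((q:ℝ)⁻¹) ^ v) :=
              ENNReal.ofReal_le_ofReal hfb
          _ = ENNReal.ofReal 4 * ENNReal.ofReal (((q:ℝ)⁻¹) ^ v) := by
              rw [ENNReal.ofReal_mul (by norm_num)]
          _ = 4 * ENNReal.ofReal (((p:ℝ) ^ (-v : ℤ)) ^ θ) := by
              rw [hkey v, ENNReal.ofReal_ofNat]
          _ = 4 * ENNReal.ofReal ((p:ℝ) ^ (-v : ℤ)) ^ (θnn : ℝ) := by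
              rw [hθnnR, ENNReal.ofReal_rpow_of_pos (by positivity)]
      have himg : Set.Ico (0:ℝ) 1 ⊆ f '' Sig := by
        rintro y ⟨hy0, hy1⟩
        obtain ⟨b, hblt, hbsum⟩ := PD.real_expansion hq2 hy0 hy1
        set a : ℕ → ℕ := fun k => ((D.orderIsoOfFin rfl ⟨b k, hblt k⟩ : D) : ℕ) with ha
        have hamem : ∀ k, a k ∈ D := fun k => (D.orderIsoOfFin rfl ⟨b k, hblt k⟩).2
        obtain ⟨x, hxdig⟩ := PD.exists_of_digits a (fun k => hDp _ (hamem k))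
        refine ⟨x, fun k => ?_, ?_⟩
        · rw [hxdig k]; exact hamem k
        · have hnum : ∀ k, PD.num D (padicDigit p x k) = b k := by
            intro k
            rw [hxdig k, ha]
            exact PD.num_enum D ⟨b k, hblt k⟩
          rw [hf, PD.f]
          rw [show (fun k => (PD.num D (padicDigit p x k) : ℝ) * ((D.card : ℝ)⁻¹) ^ (k+1))
              = fun k => (b k : ℝ) * ((q : ℝ)⁻¹) ^ (k+1) by funext k; rw [hnum k]]
          exact hbsum.tsum_eq
      have h2 : dimH (Set.Ico (0:ℝ) 1) = 1 := by
        rw [Real.dimH_of_mem_nhds (Ico_mem_nhds (by norm_num : (0:ℝ) < 1/2) (by norm_num))]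
        simp
      have h3 : (1 : ℝ≥0∞) ≤ dimH (f '' Sig) := h2 ▸ dimH_mono himg
      have h4 : dimH (f '' Sig) ≤ dimH Sig / θnn := hholder.dimH_image_le hθpos
      have h5 : (1 : ℝ≥0∞) ≤ dimH Sig / θnn := h3.trans h4
      rw [ENNReal.le_div_iff_mul_le (Or.inl (by exact_mod_cast hθpos.ne'))
        (Or.inl ENNReal.coe_ne_top), one_mul] at h5
      exact h5
    · have hq1' : q = 1 := by omega
      have : θnn = 0 := by
        rw [hθnn, hθ, hq1']
        simp
      rw [this]
      simp
  rw [hofReal]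
  exact le_antisymm hupper hlower
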